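/- arXiv:2204.12136 — 10 statements merged into one kernel-verified Lean document; each statement's English description precedes it below -/
import Mathlib

section
/- Let λ, μ, γ > 0, ξ ≥ 0, 𝔫 ≥ 1, and consider the recurrence λ(i+𝔫)a_{i+1} = −ξ + (λ+μ+γ)(i+𝔫)a_i − μ(i+𝔫)a_{i-1} for i ≥ 1 with a_0 = 0. If (a_i) and (a_i') are two solutions with initial values a_1 = x and a_1' = x' where x > x', then the difference Δ_i = a_i − a_i' satisfies the homogeneous recurrence λΔ_{i+1} = (λ+μ+γ)Δ_i − μΔ_{i-1}, is non-decreasing, and tends to ∞. -/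
open Filter

theorem stmt_5 (lm mu gm xi : ℝ) (hl : 0 < lm) (hm : 0 < mu) (hg : 0 < gm) (hxi : 0 ≤ xi)
    (n : ℕ) (hn : 1 ≤ n) (a a' : ℕ → ℝ) (h0 : a 0 = 0) (h0' : a' 0 = 0)
    (hgt : a' 1 < a 1)
    (hrec : ∀ i : ℕ,
      lm * ((i : ℝ) + 1 + n) * a (i + 2)
        = -xi + (lm + mu + gm) * ((i : ℝ) + 1 + n) * a (i + 1)
          - mu * ((i : ℝ) + 1 + n) * a i)
    (hrec' : ∀ i : ℕ,
      lm * ((i : ℝ) + 1 + n) * a' (i + 2)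
        = -xi + (lm + mu + gm) * ((i : ℝ) + 1 + n) * a' (i + 1)
          - mu * ((i : ℝ) + 1 + n) * a' i) :
    (∀ i : ℕ, lm * (a (i + 2) - a' (i + 2))
        = (lm + mu + gm) * (a (i + 1) - a' (i + 1)) - mu * (a i - a' i)) ∧
    Monotone (fun i => a i - a' i) ∧
    Tendsto (fun i => a i - a' i) atTop atTop := by
  have hc : ∀ i : ℕ, (0:ℝ) < (i : ℝ) + 1 + n := by
    intro i
    have h1 : (0:ℝ) ≤ (i:ℝ) := Nat.cast_nonneg i
    have h2 : (0:ℝ) ≤ (n:ℝ) := Nat.cast_nonneg n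
    linarith
  have key : ∀ i : ℕ, lm * (a (i + 2) - a' (i + 2))
        = (lm + mu + gm) * (a (i + 1) - a' (i + 1)) - mu * (a i - a' i) := by
    intro i
    have hcne := (hc i).ne'
    have h : ((i:ℝ)+1+n) * (lm * (a (i+2) - a' (i+2)))
        = ((i:ℝ)+1+n) * ((lm + mu + gm) * (a (i+1) - a' (i+1)) - mu * (a i - a' i)) := by
      linear_combination hrec i - hrec' i
    exact mul_left_cancel₀ hcne h
  set d : ℝ := a 1 - a' 1 with hd
  have hdpos : 0 < d := by simp [hd]; linarith
  have main : ∀ i : ℕ, a i - a' i ≤ a (i+1) - a' (i+1) ∧ d ≤ a (i+1) - a' (i+1) := by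
    intro i
    induction i with
    | zero => constructor <;> simp [h0, h0', hd] <;> linarith
    | succ k ih =>
      have hk := key k
      constructor
      · nlinarith [mul_nonneg hm.le (sub_nonneg.mpr ih.1), mul_pos hg (lt_of_lt_of_le hdpos ih.2)]
      · nlinarith [mul_nonneg hm.le (sub_nonneg.mpr ih.1), mul_pos hg (lt_of_lt_of_le hdpos ih.2)]
  have hmono : Monotone (fun i => a i - a' i) :=
    monotone_nat_of_le_succ fun i => (main i).1
  refine ⟨key, hmono, ?_⟩
  set c : ℝ := gm * d / lm with hcdef
  have hcpos : 0 < c := div_pos (mul_pos hg hdpos) hl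
  have grow : ∀ i : ℕ, d + i * c ≤ a (i+1) - a' (i+1) := by
    intro i
    induction i with
    | zero => simpa [hd] using le_refl d
    | succ k ih =>
      have hk := key k
      have h1 := (main k).1
      have h2 := (main k).2
      have hlc : lm * c = gm * d := by rw [hcdef]; field_simp [hl.ne']
      push_cast
      nlinarith [mul_nonneg hm.le (sub_nonneg.mpr h1), mul_pos hg (lt_of_lt_of_le hdpos h2)]
  have hlin : Tendsto (fun i : ℕ => d + (i : ℝ) * c) atTop atTop := by
    apply tendsto_atTop_add_const_left
    exact Tendsto.atTop_mul_const hcpos tendsto_natCast_atTop_atTop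
  have hshift : Tendsto (fun i : ℕ => a (i+1) - a' (i+1)) atTop atTop :=
    tendsto_atTop_mono grow hlin
  exact (tendsto_add_atTop_iff_nat 1).mp hshift
end

section
/- Let λ, μ, γ > 0, ξ ≥ 0, 𝔫 ≥ 1. There is at most one real number a such that the solution of the recurrence a_0 = 0, a_1 = a, λ(i+𝔫)a_{i+1} = −ξ + (λ+μ+γ)(i+𝔫)a_i − μ(i+𝔫)a_{i-1} (i ≥ 1) is a bounded sequence. -/
lemma key_hom (lm mu gm : ℝ) (hl : 0 < lm) (hm : 0 < mu) (hg : 0 < gm)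
    (b : ℕ → ℝ) (h0 : b 0 = 0)
    (hrec : ∀ i : ℕ, lm * b (i + 2) = (lm + mu + gm) * b (i + 1) - mu * b i)
    (C : ℝ) (hC : ∀ i : ℕ, |b i| ≤ C) : ¬ 0 < b 1 := by
  intro hpos
  set c := b 1 with hc
  -- monotone and ≥ c
  have step1 : ∀ i : ℕ, c ≤ b (i + 1) ∧ b i ≤ b (i + 1) := by
    intro i
    induction i with
    | zero => constructor <;> simp [h0, hc] <;> linarith
    | succ k ih =>
      have h := hrec k
      have h1 : lm * (b (k + 2) - b (k + 1)) = mu * (b (k + 1) - b k) + gm * b (k + 1) := by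
        linarith
      have h2 : 0 ≤ mu * (b (k + 1) - b k) := by nlinarith [ih.2]
      have h3 : gm * c ≤ gm * b (k + 1) := by nlinarith [ih.1]
      have h4 : 0 < lm * (b (k + 2) - b (k + 1)) := by nlinarith
      have h5 : b (k + 1) ≤ b (k + 2) := by nlinarith
      exact ⟨le_trans ih.1 h5, h5⟩
  have hd : 0 < gm * c / lm := by positivity
  -- difference lower bound
  have step2 : ∀ i : ℕ, gm * c / lm ≤ b (i + 2) - b (i + 1) := by
    intro i
    have h := hrec i
    have h2 : 0 ≤ mu * (b (i + 1) - b i) := by nlinarith [(step1 i).2]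
    have h3 : gm * c ≤ gm * b (i + 1) := by nlinarith [(step1 i).1]
    rw [div_le_iff₀ hl]
    nlinarith
  have step3 : ∀ i : ℕ, c + i * (gm * c / lm) ≤ b (i + 1) := by
    intro i
    induction i with
    | zero => simp [hc]
    | succ k ih =>
      have := step2 k
      push_cast
      have : ((k : ℝ) + 1) * (gm * c / lm) = k * (gm * c / lm) + gm * c / lm := by ring
      rw [this]
      linarith [step2 k, ih]
  obtain ⟨i, hi⟩ := exists_nat_gt ((C - c) / (gm * c / lm))
  have h1 : C - c < i * (gm * c / lm) := by
    rw [div_lt_iff₀ hd] at hi; linarith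
  have h2 := step3 i
  have h3 := hC (i + 1)
  have := abs_le.1 h3
  linarith [this.1, this.2]

theorem stmt_6 (lm mu gm xi : ℝ) (hl : 0 < lm) (hm : 0 < mu) (hg : 0 < gm) (hxi : 0 ≤ xi)
    (n : ℕ) (hn : 1 ≤ n) (a a' : ℕ → ℝ) (h0 : a 0 = 0) (h0' : a' 0 = 0)
    (hrec : ∀ i : ℕ,
      lm * ((i : ℝ) + 1 + n) * a (i + 2)
        = -xi + (lm + mu + gm) * ((i : ℝ) + 1 + n) * a (i + 1)
          - mu * ((i : ℝ) + 1 + n) * a i)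
    (hrec' : ∀ i : ℕ,
      lm * ((i : ℝ) + 1 + n) * a' (i + 2)
        = -xi + (lm + mu + gm) * ((i : ℝ) + 1 + n) * a' (i + 1)
          - mu * ((i : ℝ) + 1 + n) * a' i)
    (hbdd : ∃ C : ℝ, ∀ i : ℕ, |a i| ≤ C)
    (hbdd' : ∃ C : ℝ, ∀ i : ℕ, |a' i| ≤ C) :
    a 1 = a' 1 := by
  set b : ℕ → ℝ := fun i => a i - a' i with hb
  have hb0 : b 0 = 0 := by simp [hb, h0, h0']
  have hbrec : ∀ i : ℕ, lm * b (i + 2) = (lm + mu + gm) * b (i + 1) - mu * b i := by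
    intro i
    have h := hrec i
    have h' := hrec' i
    have hpos : (0 : ℝ) < (i : ℝ) + 1 + n := by positivity
    have hne : ((i : ℝ) + 1 + n) ≠ 0 := ne_of_gt hpos
    have heq : ((i : ℝ) + 1 + n) * (lm * b (i + 2))
        = ((i : ℝ) + 1 + n) * ((lm + mu + gm) * b (i + 1) - mu * b i) := by
      simp only [hb]; ring_nf; ring_nf at h h'; linarith
    exact mul_left_cancel₀ hne heq
  obtain ⟨C, hC⟩ := hbdd
  obtain ⟨C', hC'⟩ := hbdd'
  have hCb : ∀ i : ℕ, |b i| ≤ C + C' := by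
    intro i
    calc |b i| ≤ |a i| + |a' i| := abs_sub (a i) (a' i)
    _ ≤ C + C' := add_le_add (hC i) (hC' i)
  have hnb : ¬ 0 < b 1 := key_hom lm mu gm hl hm hg b hb0 hbrec (C + C') hCb
  have hnb' : ¬ 0 < (-b) 1 := by
    apply key_hom lm mu gm hl hm hg (-b) (by simp [hb0]) _ (C + C')
    · intro i; simpa using hCb i
    · intro i; simp only [Pi.neg_apply]; linarith [hbrec i]
  simp only [Pi.neg_apply, neg_pos] at hnb'
  have : b 1 = 0 := le_antisymm (not_lt.1 hnb) (not_lt.1 hnb')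
  simpa [hb, sub_eq_zero] using this
end

section
/- Let λ, μ, γ > 0, ξ > 0, 𝔫 ≥ 1, and let (a_i) solve a_0 = 0, λ(i+𝔫)a_{i+1} = −ξ + (λ+μ+γ)(i+𝔫)a_i − μ(i+𝔫)a_{i-1} for i ≥ 1. If there exists i_0 ≥ 1 with a_{i_0} < 0 and a_{i_0 − 1} ≥ 0, then a_i is strictly decreasing and negative for i ≥ i_0, and a_i → −∞ as i → ∞. -/
open Filter

theorem stmt_7 (lm mu gm xi : ℝ) (hl : 0 < lm) (hm : 0 < mu) (hg : 0 < gm) (hxi : 0 < xi)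
    (n : ℕ) (hn : 1 ≤ n) (a : ℕ → ℝ) (h0 : a 0 = 0)
    (hrec : ∀ i : ℕ,
      lm * ((i : ℝ) + 1 + n) * a (i + 2)
        = -xi + (lm + mu + gm) * ((i : ℝ) + 1 + n) * a (i + 1)
          - mu * ((i : ℝ) + 1 + n) * a i)
    (i0 : ℕ) (hi0 : 1 ≤ i0) (hneg : a i0 < 0) (hprev : 0 ≤ a (i0 - 1)) :
    (∀ i, i0 ≤ i → a (i + 1) < a i ∧ a i < 0) ∧ Tendsto a atTop atBot := by
  set d : ℝ := (gm / lm) * a i0 with hd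
  have hgl : 0 < gm / lm := div_pos hg hl
  have hd0 : d < 0 := mul_neg_of_pos_of_neg hgl hneg
  have key : ∀ j : ℕ, a (j + 1) ≤ a j → a (j + 2) - a (j + 1) ≤ (gm / lm) * a (j + 1) := by
    intro j hle
    have hc : (0 : ℝ) < (j : ℝ) + 1 + n := by positivity
    have hdiv : (gm / lm) * a (j + 1) = gm * a (j + 1) / lm := by ring
    rw [hdiv, le_div_iff₀ hl]
    nlinarith [hrec j, mul_pos hm hc, hxi,
      mul_nonneg (mul_nonneg hm.le hc.le) (sub_nonneg.mpr hle)]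
  obtain ⟨j, rfl⟩ : ∃ j, i0 = j + 1 := ⟨i0 - 1, by omega⟩
  have hprev' : 0 ≤ a j := by simpa using hprev
  have H : ∀ k : ℕ, a (j + 1 + k) ≤ a (j + 1) ∧ a (j + 1 + k + 1) - a (j + 1 + k) ≤ d := by
    intro k
    induction k with
    | zero =>
      refine ⟨le_refl _, ?_⟩
      have := key j (hneg.le.trans hprev')
      simpa [hd] using this
    | succ k ih =>
      obtain ⟨h1, h2⟩ := ih
      have hle : a (j + 1 + k + 1) ≤ a (j + 1 + k) := by linarith
      have h1' : a (j + 1 + (k + 1)) ≤ a (j + 1) := by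
        have : a (j + 1 + k + 1) ≤ a (j + 1 + k) + d := by linarith
        have : a (j + 1 + k + 1) ≤ a (j + 1) := by linarith
        simpa [Nat.add_assoc] using this
      refine ⟨h1', ?_⟩
      have hk := key (j + 1 + k) hle
      have : (gm / lm) * a (j + 1 + k + 1) ≤ d := by
        rw [hd]
        exact mul_le_mul_of_nonneg_left (by simpa [Nat.add_assoc] using h1') hgl.le
      have : a (j + 1 + k + 2) - a (j + 1 + k + 1) ≤ d := le_trans hk this
      simpa [Nat.add_assoc, Nat.add_comm, Nat.add_left_comm] using this
  have main : ∀ i, j + 1 ≤ i → a (i + 1) < a i ∧ a i < 0 := by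
    intro i hi
    obtain ⟨k, rfl⟩ := Nat.exists_eq_add_of_le hi
    obtain ⟨h1, h2⟩ := H k
    exact ⟨by linarith, lt_of_le_of_lt h1 hneg⟩
  refine ⟨main, ?_⟩
  have B : ∀ k : ℕ, a (j + 1 + k) ≤ a (j + 1) + (k : ℝ) * d := by
    intro k
    induction k with
    | zero => simp
    | succ k ih =>
      obtain ⟨_, h2⟩ := H k
      push_cast
      have : a (j + 1 + (k + 1)) = a (j + 1 + k + 1) := by ring_nf
      rw [this]
      linarith
  have hf : Tendsto (fun i : ℕ => a (j + 1) + ((i : ℝ) - (j + 1)) * d) atTop atBot := by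
    apply tendsto_atBot_add_const_left
    exact Tendsto.atTop_mul_const_of_neg hd0
      (tendsto_atTop_add_const_right _ _ tendsto_natCast_atTop_atTop)
  refine tendsto_atBot_mono' atTop ?_ hf
  filter_upwards [eventually_ge_atTop (j + 1)] with i hi
  obtain ⟨k, rfl⟩ := Nat.exists_eq_add_of_le hi
  have := B k
  push_cast
  have : ((j : ℝ) + 1 + k - (j + 1)) * d = (k : ℝ) * d := by ring
  rw [this]
  have := B k
  push_cast at this
  linarith
end

section
/- Let λ, μ, γ > 0, ξ ≥ 0, 𝔫 ≥ 1, q = λ+μ+γ, and let (a_i) solve a_0 = 0, a_1 = x, λ(i+𝔫)a_{i+1} = −ξ + q(i+𝔫)a_i − μ(i+𝔫)a_{i-1}. Then for any z within the radius of convergence of the power series 𝓔(z) = Σ_{i≥0} a_i z^i (assumed positive), one has (λ + μz² − qz)·𝓔(z) = zλx − zξ·Σ_{k≥1} z^k/(k+𝔫). -/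
set_option maxHeartbeats 800000 in

theorem stmt_8 (lm mu gm xi x : ℝ) (hl : 0 < lm) (hm : 0 < mu) (hg : 0 < gm) (hxi : 0 ≤ xi)
    (n : ℕ) (hn : 1 ≤ n) (a : ℕ → ℝ) (h0 : a 0 = 0) (h1 : a 1 = x)
    (hrec : ∀ i : ℕ,
      lm * ((i : ℝ) + 1 + n) * a (i + 2)
        = -xi + (lm + mu + gm) * ((i : ℝ) + 1 + n) * a (i + 1)
          - mu * ((i : ℝ) + 1 + n) * a i)
    (R : ℝ) (hR : 0 < R)
    (hconv : ∀ w : ℝ, |w| < R → Summable (fun i : ℕ => a i * w ^ i))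
    (z : ℝ) (hz : |z| < R)
    (hlog : Summable (fun k : ℕ => z ^ (k + 1) / ((k : ℝ) + 1 + n))) :
    (lm + mu * z ^ 2 - (lm + mu + gm) * z) * (∑' i : ℕ, a i * z ^ i)
      = z * lm * x - z * xi * ∑' k : ℕ, z ^ (k + 1) / ((k : ℝ) + 1 + n) := by
  set q : ℝ := lm + mu + gm with hqdef
  have hS0 : Summable (fun i : ℕ => a i * z ^ i) := hconv z hz
  have hS1 : Summable (fun i : ℕ => a (i + 1) * z ^ (i + 1)) :=
    (summable_nat_add_iff 1).mpr hS0
  have hS2 : Summable (fun i : ℕ => a (i + 2) * z ^ (i + 2)) :=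
    (summable_nat_add_iff 2).mpr hS0
  set E : ℝ := ∑' i : ℕ, a i * z ^ i with hEdef
  set E1 : ℝ := ∑' i : ℕ, a (i + 1) * z ^ (i + 1) with hE1def
  set E2 : ℝ := ∑' i : ℕ, a (i + 2) * z ^ (i + 2) with hE2def
  set S : ℝ := ∑' k : ℕ, z ^ (k + 1) / ((k : ℝ) + 1 + n) with hSdef
  have hE : E = E1 := by
    rw [hEdef, Summable.tsum_eq_zero_add hS0, h0]; ring
  have hE1 : E1 = x * z + E2 := by
    rw [hE1def, Summable.tsum_eq_zero_add hS1, h1]; ring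
  have hrw : (fun i : ℕ => lm * (a (i + 2) * z ^ (i + 2)))
      = fun i : ℕ => (q * z) * (a (i + 1) * z ^ (i + 1))
        - (mu * z ^ 2) * (a i * z ^ i)
        - (xi * z) * (z ^ (i + 1) / ((i : ℝ) + 1 + n)) := by
    funext i
    have hne : ((i : ℝ) + 1 + (n : ℝ)) ≠ 0 := by positivity
    have h := hrec i
    field_simp
    linear_combination z ^ (i + 2) * h
  have t2 : Summable (fun i : ℕ => (q * z) * (a (i + 1) * z ^ (i + 1))) := hS1.mul_left _
  have t3 : Summable (fun i : ℕ => (mu * z ^ 2) * (a i * z ^ i)) := hS0.mul_left _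
  have t1 : Summable (fun i : ℕ => (xi * z) * (z ^ (i + 1) / ((i : ℝ) + 1 + n))) :=
    hlog.mul_left _
  have main : lm * E2 = q * z * E1 - mu * z ^ 2 * E - xi * z * S := by
    calc lm * E2 = ∑' i : ℕ, lm * (a (i + 2) * z ^ (i + 2)) := (tsum_mul_left).symm
      _ = ∑' i : ℕ, ((q * z) * (a (i + 1) * z ^ (i + 1))
            - (mu * z ^ 2) * (a i * z ^ i)
            - (xi * z) * (z ^ (i + 1) / ((i : ℝ) + 1 + n))) := by rw [hrw]
      _ = (∑' i : ℕ, ((q * z) * (a (i + 1) * z ^ (i + 1))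
            - (mu * z ^ 2) * (a i * z ^ i)))
          - ∑' i : ℕ, (xi * z) * (z ^ (i + 1) / ((i : ℝ) + 1 + n)) :=
        Summable.tsum_sub (t2.sub t3) t1
      _ = q * z * E1 - mu * z ^ 2 * E - xi * z * S := by
        rw [Summable.tsum_sub t2 t3, tsum_mul_left, tsum_mul_left, tsum_mul_left]
  linear_combination main + lm * hE1 + (lm - q * z) * hE
end

section
/- Let λ, μ, γ > 0, ξ ≥ 0, 𝔫 ≥ 1, q = λ+μ+γ, and let 𝑎̲ < ā be the real roots of μX² − qX + λ, and c = (q² − 4λμ)^{−1/2}. Any solution (a_i) of a_0 = 0, a_1 = x > 0, λ(i+𝔫)a_{i+1} = −ξ + q(i+𝔫)a_i − μ(i+𝔫)a_{i-1} satisfies, for all i ≥ 1, a_i = λxc·(𝑎̲^{−i} − ā^{−i}) − Σ_{k=1}^{i−1} (cξ/(k+𝔫))·(𝑎̲^{−(i−k)} − ā^{−(i−k)}). -/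
noncomputable def Gg (ra rb : ℝ) (m : ℕ) : ℝ := (ra⁻¹) ^ m - (rb⁻¹) ^ m

noncomputable def Ww (c xi : ℝ) (n k : ℕ) : ℝ := c * xi / ((k : ℝ) + n)

noncomputable def Ff (lm x c xi ra rb : ℝ) (n i : ℕ) : ℝ :=
  lm * x * c * Gg ra rb i - ∑ k ∈ Finset.Ico 1 i, Ww c xi n k * Gg ra rb (i - k)

theorem stmt_10 (lm mu gm xi x : ℝ) (hl : 0 < lm) (hm : 0 < mu) (hg : 0 < gm)
    (hxi : 0 ≤ xi) (hx : 0 < x) (n : ℕ) (hn : 1 ≤ n)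
    (ra rb : ℝ) (hlt : ra < rb)
    (hra : mu * ra ^ 2 - (lm + mu + gm) * ra + lm = 0)
    (hrb : mu * rb ^ 2 - (lm + mu + gm) * rb + lm = 0)
    (c : ℝ) (hc : c = (Real.sqrt ((lm + mu + gm) ^ 2 - 4 * lm * mu))⁻¹)
    (a : ℕ → ℝ) (h0 : a 0 = 0) (h1 : a 1 = x)
    (hrec : ∀ i : ℕ,
      lm * ((i : ℝ) + 1 + n) * a (i + 2)
        = -xi + (lm + mu + gm) * ((i : ℝ) + 1 + n) * a (i + 1)
          - mu * ((i : ℝ) + 1 + n) * a i) :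
    ∀ i : ℕ, 1 ≤ i →
      a i = lm * x * c * ((ra ^ i)⁻¹ - (rb ^ i)⁻¹)
        - ∑ k ∈ Finset.Ico 1 i,
            (c * xi / ((k : ℝ) + n)) * ((ra ^ (i - k))⁻¹ - (rb ^ (i - k))⁻¹) := by
  have hne : ra ≠ rb := ne_of_lt hlt
  have hsum : mu * (ra + rb) = lm + mu + gm := by
    have h2 : (mu * (ra + rb) - (lm + mu + gm)) * (ra - rb) = 0 := by
      linear_combination hra - hrb
    rcases mul_eq_zero.mp h2 with h | h
    · linarith [sub_eq_zero.mp h]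
    · exact absurd (sub_eq_zero.mp h) hne
  have hprod : mu * (ra * rb) = lm := by linear_combination ra * hsum - hra
  have hra0 : 0 < ra := by nlinarith
  have hrb0 : 0 < rb := lt_trans hra0 hlt
  have hdisc : (lm + mu + gm) ^ 2 - 4 * lm * mu = (mu * (rb - ra)) ^ 2 := by
    linear_combination (-(lm + mu + gm) - mu * (ra + rb)) * hsum + 4 * mu * hprod
  have hmba : (0:ℝ) < mu * (rb - ra) := by
    have : (0:ℝ) < rb - ra := by linarith
    positivity
  have hcm : c * (mu * (rb - ra)) = 1 := by
    rw [hc, hdisc, Real.sqrt_sq hmba.le]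
    exact inv_mul_cancel₀ hmba.ne'
  have hbq : lm * (ra⁻¹) ^ 2 = (lm + mu + gm) * ra⁻¹ - mu := by
    field_simp
    linear_combination hra
  have hbq' : lm * (rb⁻¹) ^ 2 = (lm + mu + gm) * rb⁻¹ - mu := by
    field_simp
    linear_combination hrb
  have hG : ∀ m : ℕ, lm * Gg ra rb (m + 2)
      = (lm + mu + gm) * Gg ra rb (m + 1) - mu * Gg ra rb m := by
    intro m
    simp only [Gg]
    linear_combination ((ra⁻¹) ^ m) * hbq - ((rb⁻¹) ^ m) * hbq'
  have hone : lm * (ra⁻¹ - rb⁻¹) = mu * (rb - ra) := by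
    field_simp
    linear_combination (-1 : ℝ) * hprod
  have hG0z : Gg ra rb 0 = 0 := by simp [Gg]
  have hG1 : lm * Gg ra rb 1 = mu * (rb - ra) := by
    simpa [Gg] using hone
  have hFrec : ∀ i : ℕ,
      lm * ((i : ℝ) + 1 + n) * Ff lm x c xi ra rb n (i + 2)
        = -xi + (lm + mu + gm) * ((i : ℝ) + 1 + n) * Ff lm x c xi ra rb n (i + 1)
          - mu * ((i : ℝ) + 1 + n) * Ff lm x c xi ra rb n i := by
    intro i
    rcases i with _ | j
    · have hW0 : Ww c xi n 1 * (((1 : ℕ) : ℝ) + n) = c * xi :=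
        div_mul_cancel₀ _ (by positivity)
      have hF0 : Ff lm x c xi ra rb n 0 = 0 := by simp [Ff, Gg]
      have hF1 : Ff lm x c xi ra rb n 1 = lm * x * c * Gg ra rb 1 := by simp [Ff]
      have hF2 : Ff lm x c xi ra rb n 2
          = lm * x * c * Gg ra rb 2 - Ww c xi n 1 * Gg ra rb 1 := by
        have : Finset.Ico 1 2 = {1} := rfl
        simp [Ff, this]
      rw [show (0 : ℕ) + 2 = 2 from rfl, show (0 : ℕ) + 1 = 1 from rfl, hF0, hF1, hF2]
      linear_combination (norm := (push_cast; ring1))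
        ((1 + (n : ℝ)) * lm * x * c) * hG 0
        - ((1 + (n : ℝ)) * lm * x * c * mu) * hG0z
        - (lm * Gg ra rb 1) * hW0
        - (c * xi) * hG1
        - xi * hcm
    · set m := j + 1 with hmdef
      clear_value m
      have hNpos : (0:ℝ) < (m : ℝ) + 1 + n := by positivity
      have hW : Ww c xi n (m + 1) * ((m : ℝ) + 1 + n) = c * xi := by
        simp only [Ww]
        push_cast
        exact div_mul_cancel₀ _ hNpos.ne'
      have e2 : ∑ k ∈ Finset.Ico 1 (m + 2), Ww c xi n k * Gg ra rb (m + 2 - k)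
          = (∑ k ∈ Finset.Ico 1 m, Ww c xi n k * Gg ra rb ((m - k) + 2))
            + Ww c xi n m * Gg ra rb 2 + Ww c xi n (m + 1) * Gg ra rb 1 := by
        have hcg : ∀ k ∈ Finset.Ico 1 m, Ww c xi n k * Gg ra rb (m + 2 - k)
            = Ww c xi n k * Gg ra rb ((m - k) + 2) := by
          intro k hk
          have hk' := (Finset.mem_Ico.mp hk).2
          rw [show m + 2 - k = m - k + 2 from by omega]
        rw [Finset.sum_Ico_succ_top (by omega : 1 ≤ m + 1),
          Finset.sum_Ico_succ_top (by omega : 1 ≤ m),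
          show m + 2 - m = 2 from by omega, show m + 2 - (m + 1) = 1 from by omega,
          Finset.sum_congr rfl hcg]
      have e1 : ∑ k ∈ Finset.Ico 1 (m + 1), Ww c xi n k * Gg ra rb (m + 1 - k)
          = (∑ k ∈ Finset.Ico 1 m, Ww c xi n k * Gg ra rb ((m - k) + 1))
            + Ww c xi n m * Gg ra rb 1 := by
        have hcg : ∀ k ∈ Finset.Ico 1 m, Ww c xi n k * Gg ra rb (m + 1 - k)
            = Ww c xi n k * Gg ra rb ((m - k) + 1) := by
          intro k hk
          have hk' := (Finset.mem_Ico.mp hk).2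
          rw [show m + 1 - k = m - k + 1 from by omega]
        rw [Finset.sum_Ico_succ_top (by omega : 1 ≤ m),
          show m + 1 - m = 1 from by omega, Finset.sum_congr rfl hcg]
      simp only [Ff]
      rw [e2, e1]
      set T2 := ∑ k ∈ Finset.Ico 1 m, Ww c xi n k * Gg ra rb ((m - k) + 2) with hT2
      set T1 := ∑ k ∈ Finset.Ico 1 m, Ww c xi n k * Gg ra rb ((m - k) + 1) with hT1
      set T0 := ∑ k ∈ Finset.Ico 1 m, Ww c xi n k * Gg ra rb (m - k) with hT0
      have hT : lm * T2 = (lm + mu + gm) * T1 - mu * T0 := by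
        rw [hT2, hT1, hT0]
        simp only [Finset.mul_sum, ← Finset.sum_sub_distrib]
        apply Finset.sum_congr rfl
        intro k hk
        linear_combination (Ww c xi n k) * hG (m - k)
      linear_combination (((m : ℝ) + 1 + n) * lm * x * c) * hG m
        - (((m : ℝ) + 1 + n)) * hT
        - (((m : ℝ) + 1 + n) * Ww c xi n m) * hG 0
        + (((m : ℝ) + 1 + n) * Ww c xi n m * mu) * hG0z
        - (lm * Gg ra rb 1) * hW
        - (c * xi) * hG1
        - xi * hcm
  have key : ∀ i : ℕ, a i = Ff lm x c xi ra rb n i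
      ∧ a (i + 1) = Ff lm x c xi ra rb n (i + 1) := by
    intro i
    induction i with
    | zero =>
      constructor
      · simp [Ff, Gg, h0]
      · rw [h1]
        simp only [Ff, Gg, Finset.Ico_self, Finset.sum_empty, pow_one, sub_zero]
        linear_combination (-x * c) * hone - x * hcm
    | succ i ih =>
      refine ⟨ih.2, ?_⟩
      have hNpos : (0:ℝ) < (i : ℝ) + 1 + n := by positivity
      have hne2 : lm * ((i : ℝ) + 1 + n) ≠ 0 := by positivity
      have h := hrec i
      rw [ih.1, ih.2] at h
      exact mul_left_cancel₀ hne2 (h.trans (hFrec i).symm)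
  intro i hi
  rw [(key i).1]
  simp only [Ff, Gg, Ww, inv_pow]
end

section
/- Let λ, μ, γ > 0, ξ > 0, 𝔫 ≥ 1, and 𝑎̲ ∈ (0,1) the smaller root of μX² − (λ+μ+γ)X + λ. Define â = (ξ/λ)·(Σ_{k=0}^∞ 𝑎̲^k/(𝔫+k) − 1/𝔫). If a_1 < â, then the solution (a_i) to a_0 = 0, λ(i+𝔫)a_{i+1} = −ξ + (λ+μ+γ)(i+𝔫)a_i − μ(i+𝔫)a_{i-1} is not everywhere nonnegative: there exists i_0 with a_{i_0} < 0. -/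
theorem stmt_11 (lm mu gm xi : ℝ) (hl : 0 < lm) (hm : 0 < mu) (hg : 0 < gm) (hxi : 0 < xi)
    (n : ℕ) (hn : 1 ≤ n)
    (ra : ℝ) (hra01 : ra ∈ Set.Ioo (0 : ℝ) 1)
    (hra : mu * ra ^ 2 - (lm + mu + gm) * ra + lm = 0)
    (hra_small : ∀ z : ℝ, mu * z ^ 2 - (lm + mu + gm) * z + lm = 0 → ra ≤ z)
    (a : ℕ → ℝ) (h0 : a 0 = 0)
    (hrec : ∀ i : ℕ,
      lm * ((i : ℝ) + 1 + n) * a (i + 2)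
        = -xi + (lm + mu + gm) * ((i : ℝ) + 1 + n) * a (i + 1)
          - mu * ((i : ℝ) + 1 + n) * a i)
    (hlt : a 1 < (xi / lm) * ((∑' k : ℕ, ra ^ k / ((n : ℝ) + k)) - 1 / n)) :
    ∃ i0 : ℕ, a i0 < 0 := by
  obtain ⟨hra0, hra1⟩ := hra01
  by_contra hcon
  push_neg at hcon
  have hn0 : (1:ℝ) ≤ n := by exact_mod_cast hn
  obtain ⟨c, hc⟩ : ∃ c : ℝ, c = xi / lm := ⟨_, rfl⟩
  have hc0 : 0 < c := by rw [hc]; exact div_pos hxi hl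
  obtain ⟨ρ, hρdef⟩ : ∃ ρ : ℝ, ρ = mu * ra / lm := ⟨_, rfl⟩
  have hρ0 : 0 ≤ ρ := by rw [hρdef]; positivity
  have hρ1 : ρ < 1 := by
    rw [hρdef, div_lt_one hl]
    nlinarith
  have hρl : ρ * lm = mu * ra := by
    rw [hρdef]; field_simp
  obtain ⟨v, hvdef⟩ : ∃ v : ℕ → ℝ, ∀ i, v i = a (i+1) - ρ * a i := ⟨_, fun i => rfl⟩
  have hvrec : ∀ i : ℕ, ra * v (i+1) = v i - c * ra / ((i:ℝ)+1+n) := by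
    intro i
    have hP : (0:ℝ) < (i:ℝ)+1+n := by positivity
    have hne : lm * ((i:ℝ)+1+n) ≠ 0 := by positivity
    have key := hrec i
    have hmul : lm * (((i:ℝ)+1+n)) * (ra * (a (i+2) - ρ * a (i+1)))
        = lm * (((i:ℝ)+1+n)) * (a (i+1) - ρ * a i) - xi * ra := by
      linear_combination ra * key + (((i:ℝ)+1+n) * (a i - ra * a (i+1))) * hρl
        - (((i:ℝ)+1+n) * a (i+1)) * hra
    have hdivq : xi * ra / (lm * (((i:ℝ)+1+n)))
        = (a (i+1) - ρ * a i) - ra * (a (i+2) - ρ * a (i+1)) := by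
      rw [div_eq_iff hne]
      linear_combination hmul
    have hcra : c * ra / ((i:ℝ)+1+n) = xi * ra / (lm * (((i:ℝ)+1+n))) := by
      rw [hc, div_mul_eq_mul_div, div_div]
    rw [hvdef (i+1), hvdef i, hcra, hdivq]
    show ra * (a (i+2) - ρ * a (i+1)) = _
    ring
  -- closed form
  have hclosed : ∀ i : ℕ, ra^i * v i
      = a 1 - c * ((∑ k ∈ Finset.range (i+1), ra^k / ((n:ℝ)+k)) - 1/n) := by
    intro i
    induction i with
    | zero => simp [hvdef 0, h0]
    | succ i ih =>
      rw [Finset.sum_range_succ]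
      have hstep := hvrec i
      have hkey : ra^(i+1) * v (i+1) = ra^i * v i - c * ra^(i+1) / ((i:ℝ)+1+n) := by
        rw [pow_succ]
        linear_combination ra^i * hstep
      rw [hkey, ih]
      push_cast
      ring
  -- summability
  have hsum : Summable (fun k : ℕ => ra ^ k / ((n:ℝ) + k)) := by
    apply Summable.of_nonneg_of_le (fun k => by positivity) (fun k => ?_)
      (summable_geometric_of_lt_one hra0.le hra1)
    apply div_le_self (by positivity)
    have : (0:ℝ) ≤ (k:ℝ) := Nat.cast_nonneg k
    linarith
  have htend : Filter.Tendsto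
      (fun m => a 1 - c * ((∑ k ∈ Finset.range (m+1), ra^k / ((n:ℝ)+k)) - 1/n))
      Filter.atTop (nhds (a 1 - c * ((∑' k : ℕ, ra ^ k / ((n : ℝ) + k)) - 1/n))) := by
    have h1 := hsum.hasSum.tendsto_sum_nat
    have h2 := h1.comp (Filter.tendsto_add_atTop_nat 1)
    exact Filter.Tendsto.const_sub _ (((h2.sub_const (1/n)).const_mul c))
  have hlim_neg : a 1 - c * ((∑' k : ℕ, ra ^ k / ((n : ℝ) + k)) - 1/n) < 0 := by
    rw [hc]; linarith
  obtain ⟨m, hm0⟩ := (htend.eventually (gt_mem_nhds hlim_neg)).exists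
  have hvm : v m < 0 := by
    have hpow : (0:ℝ) < ra^m := by positivity
    have h2 : ra^m * v m < 0 := by rw [hclosed m]; exact hm0
    by_contra h
    push_neg at h
    nlinarith [mul_nonneg hpow.le h]
  -- v stays ≤ v m
  have hvdec : ∀ k : ℕ, v (m+k) ≤ v m := by
    intro k
    induction k with
    | zero => simp
    | succ k ih =>
      show v (m+k+1) ≤ v m
      have hP : (0:ℝ) < ((m+k:ℕ):ℝ)+1+n := by positivity
      have hstep := hvrec (m+k)
      have hq : 0 < c * ra / (((m+k:ℕ):ℝ)+1+n) := by positivity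
      have h1 : ra * v (m+k+1) ≤ v m := by linarith
      nlinarith [mul_pos (sub_pos.mpr hra1) (neg_pos.mpr hvm)]
  -- descent
  have hdesc : ∀ k : ℕ, a (m+k+1) ≤ ρ^(k+1) * a m + v m := by
    intro k
    induction k with
    | zero =>
      have hdef := hvdef m
      show a (m+1) ≤ ρ^1 * a m + v m
      rw [pow_one]
      linarith
    | succ k ih =>
      show a (m+k+2) ≤ ρ^(k+2) * a m + v m
      have hvle : v (m+k+1) ≤ v m := hvdec (k+1)
      have hdef := hvdef (m+k+1)
      have hdef' : v (m+k+1) = a (m+k+2) - ρ * a (m+k+1) := hdef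
      have hmm := mul_le_mul_of_nonneg_left ih hρ0
      have hρvm : ρ * v m ≤ 0 := mul_nonpos_of_nonneg_of_nonpos hρ0 hvm.le
      have hexp : ρ * (ρ^(k+1) * a m + v m) = ρ^(k+2) * a m + ρ * v m := by ring
      linarith
  -- choose k with ρ^(k+1) * a m < -v m
  have htend2 : Filter.Tendsto (fun k : ℕ => ρ^(k+1) * a m) Filter.atTop (nhds 0) := by
    have h1 := tendsto_pow_atTop_nhds_zero_of_lt_one hρ0 hρ1
    have h2 := (h1.comp (Filter.tendsto_add_atTop_nat 1)).mul_const (a m)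
    simpa using h2
  obtain ⟨k, hk⟩ := (htend2.eventually (gt_mem_nhds (neg_pos.mpr hvm))).exists
  have hneg : a (m+k+1) < 0 := by
    have := hdesc k
    linarith
  exact absurd (hcon (m+k+1)) (not_le.mpr hneg)
end

section
/- Let λ, μ, γ > 0, ξ > 0, 𝔫 ≥ 1, 𝑎̲ ∈ (0,1) the smaller root of μX² − (λ+μ+γ)X + λ, and â = (ξ/λ)(Σ_{k=0}^∞ 𝑎̲^k/(𝔫+k) − 1/𝔫). The solution (a_i) with a_0 = 0, a_1 = â of λ(i+𝔫)a_{i+1} = −ξ + (λ+μ+γ)(i+𝔫)a_i − μ(i+𝔫)a_{i-1} satisfies a_i > 0 for all i ≥ 1, a_i → 0 as i → ∞, and a_i = O(1/i); moreover every other positive solution with a_0 = 0 dominates it, i.e. it is the minimal positive solution. -/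
open Filter

private lemma geom_term_le {r c : ℝ} (h0 : 0 ≤ r) (hc : 0 < c) (k : ℕ) :
    r ^ k / (c + k) ≤ r ^ k * c⁻¹ := by
  rw [← div_eq_mul_inv]
  gcongr
  exact le_add_of_nonneg_right (Nat.cast_nonneg k)

private lemma geom_summable {r c : ℝ} (h0 : 0 ≤ r) (h1 : r < 1) (hc : 0 < c) :
    Summable (fun k : ℕ => r ^ k / (c + k)) :=
  Summable.of_nonneg_of_le (fun k => by positivity) (geom_term_le h0 hc)
    ((summable_geometric_of_lt_one h0 h1).mul_right _)

private lemma geom_shift {r c : ℝ} (h0 : 0 ≤ r) (h1 : r < 1) (hc : 0 < c) :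
    (∑' k : ℕ, r ^ k / (c + k)) = 1 / c + r * ∑' k : ℕ, r ^ k / ((c + 1) + k) := by
  rw [Summable.tsum_eq_zero_add (geom_summable h0 h1 hc)]
  congr 1
  · norm_num
  · rw [← tsum_mul_left]
    apply tsum_congr
    intro k
    rw [pow_succ]
    push_cast
    ring

private lemma geom_tsum_pos {r c : ℝ} (h0 : 0 < r) (h1 : r < 1) (hc : 0 < c) :
    0 < ∑' k : ℕ, r ^ k / (c + k) := by
  apply Summable.tsum_pos (geom_summable h0.le h1 hc) (fun k => by positivity) 0
  norm_num [hc]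

private lemma geom_tsum_le {r c : ℝ} (h0 : 0 ≤ r) (h1 : r < 1) (hc : 0 < c) :
    (∑' k : ℕ, r ^ k / (c + k)) ≤ (1 - r)⁻¹ * c⁻¹ :=
  calc (∑' k : ℕ, r ^ k / (c + k)) ≤ ∑' k : ℕ, r ^ k * c⁻¹ :=
        Summable.tsum_le_tsum (geom_term_le h0 hc) (geom_summable h0 h1 hc)
          ((summable_geometric_of_lt_one h0 h1).mul_right _)
    _ = (1 - r)⁻¹ * c⁻¹ := by rw [tsum_mul_right, tsum_geometric_of_lt_one h0 h1]

private def minSol (bet : ℝ) (v : ℕ → ℝ) : ℕ → ℝ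
  | 0 => 0
  | m + 1 => bet * minSol bet v m + v m

private lemma eq_minSol (lm mu gm xi : ℝ) (n : ℕ) (al bet : ℝ) (v : ℕ → ℝ)
    (hsum : lm * (al + bet) = lm + mu + gm)
    (hprod : lm * (al * bet) = mu)
    (hv_rec : ∀ m : ℕ,
      ((n : ℝ) + m + 1) * (lm * v (m + 1)) = ((n : ℝ) + m + 1) * (lm * al * v m) - xi)
    (a : ℕ → ℝ) (h0 : a 0 = 0) (h1 : a 1 = v 0) (hl : 0 < lm) (hnpos : (0:ℝ) < n)
    (hrec : ∀ i : ℕ,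
      lm * ((i : ℝ) + 1 + n) * a (i + 2)
        = -xi + (lm + mu + gm) * ((i : ℝ) + 1 + n) * a (i + 1)
          - mu * ((i : ℝ) + 1 + n) * a i) :
    ∀ i : ℕ, a i = minSol bet v i := by
  set A := minSol bet v with hA_def
  have hA0 : A 0 = 0 := rfl
  have hAs : ∀ m : ℕ, A (m + 1) = bet * A m + v m := fun m => rfl
  have hA_rec : ∀ i : ℕ,
      lm * ((i : ℝ) + 1 + n) * A (i + 2)
        = -xi + (lm + mu + gm) * ((i : ℝ) + 1 + n) * A (i + 1)
          - mu * ((i : ℝ) + 1 + n) * A i := by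
    intro i
    have hv := hv_rec i
    rw [hAs (i + 1), hAs i]
    push_cast at hv ⊢
    linear_combination hv + (((i:ℝ) + 1 + n) * (bet * A i + v i)) * hsum
      - (((i:ℝ) + 1 + n) * A i) * hprod
  have key : ∀ i : ℕ, a i = A i ∧ a (i + 1) = A (i + 1) := by
    intro i
    induction i with
    | zero =>
      refine ⟨by rw [h0, hA0], ?_⟩
      rw [h1, hAs 0, hA0, mul_zero, zero_add]
    | succ i ih =>
      refine ⟨ih.2, ?_⟩
      have e1 := hrec i
      have e2 := hA_rec i
      rw [ih.1, ih.2] at e1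
      have hcpos : lm * ((i : ℝ) + 1 + n) ≠ 0 := by positivity
      exact mul_left_cancel₀ hcpos (e1.trans e2.symm)
  exact fun i => (key i).1

private lemma minSol_nonneg {bet : ℝ} {v : ℕ → ℝ} (hbet0 : 0 < bet)
    (hv_pos : ∀ m : ℕ, 0 < v m) : ∀ m : ℕ, 0 ≤ minSol bet v m := by
  intro m
  induction m with
  | zero => exact le_refl 0
  | succ m ih =>
    show 0 ≤ bet * minSol bet v m + v m
    exact add_nonneg (mul_nonneg hbet0.le ih) (hv_pos m).le

private lemma minSol_bound (n : ℕ) (bet K : ℝ) (v : ℕ → ℝ) (hbet0 : 0 < bet)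
    (hbet1 : bet < 1) (hv_pos : ∀ m : ℕ, 0 < v m) (hK0 : 0 < K)
    (hv_le : ∀ m : ℕ, ((n : ℝ) + m + 1) * v m ≤ K) (hnpos : (0:ℝ) < n) :
    ∃ C : ℝ, 0 < C ∧ ∀ m : ℕ, ((n : ℝ) + m) * minSol bet v m ≤ C := by
  set A := minSol bet v with hA_def
  have hAs : ∀ m : ℕ, A (m + 1) = bet * A m + v m := fun m => rfl
  have hA_nonneg : ∀ m : ℕ, 0 ≤ A m := minSol_nonneg hbet0 hv_pos
  obtain ⟨M, hM⟩ := exists_nat_ge (2 * bet / (1 - bet))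
  set D : ℝ := max (((n : ℝ) + M) * A M) (K / ((1 - bet) / 2)) with hD_def
  have hD0 : 0 < D := by
    have h2 : (0:ℝ) < K / ((1 - bet) / 2) := by
      apply div_pos hK0; linarith
    exact lt_of_lt_of_le h2 (le_max_right _ _)
  have hKD : K ≤ (1 - bet) / 2 * D := by
    rw [← div_le_iff₀' (by linarith : (0:ℝ) < (1 - bet) / 2), hD_def]
    exact le_max_right _ _
  have htail : ∀ m : ℕ, M ≤ m → ((n : ℝ) + m) * A m ≤ D := by
    intro m hm
    induction m, hm using Nat.le_induction with
    | base => exact le_max_left _ _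
    | succ m hm ih =>
      have hMm : 2 * bet ≤ (1 - bet) * ((n : ℝ) + m) := by
        have h1 : (M : ℝ) ≤ (n : ℝ) + m := by
          have : (M : ℝ) ≤ (m : ℝ) := by exact_mod_cast hm
          linarith
        have h2 : 2 * bet / (1 - bet) ≤ (n : ℝ) + m := le_trans hM h1
        rw [div_le_iff₀ (by linarith : (0:ℝ) < 1 - bet)] at h2
        linarith
      have hv' := hv_le m
      have expand : ((n : ℝ) + (m + 1 : ℕ)) * A (m + 1)
          = bet * (((n : ℝ) + m) * A m) + bet * A m + ((n : ℝ) + m + 1) * v m := by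
        rw [hAs]; push_cast; ring
      have t1 : 2 * bet * A m ≤ (1 - bet) * ((n : ℝ) + m) * A m := by
        nlinarith [hA_nonneg m]
      have t3 : bet * (((n : ℝ) + m) * A m) ≤ bet * D :=
        mul_le_mul_of_nonneg_left ih hbet0.le
      rw [expand]
      nlinarith [mul_le_mul_of_nonneg_left ih (by linarith : (0:ℝ) ≤ 1 - bet)]
  refine ⟨D + ∑ j ∈ Finset.range (M + 1), ((n : ℝ) + j) * A j, ?_, ?_⟩
  · have : (0:ℝ) ≤ ∑ j ∈ Finset.range (M + 1), ((n : ℝ) + j) * A j :=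
      Finset.sum_nonneg fun j _ => mul_nonneg (by positivity) (hA_nonneg j)
    linarith
  · intro m
    rcases le_or_gt m M with h | h
    · have hs := Finset.single_le_sum (f := fun j : ℕ => ((n : ℝ) + j) * A j)
        (fun j _ => mul_nonneg (by positivity) (hA_nonneg j))
        (Finset.mem_range.2 (Nat.lt_succ_of_le h))
      have hs' : ((n : ℝ) + m) * A m
          ≤ ∑ j ∈ Finset.range (M + 1), ((n : ℝ) + j) * A j := hs
      linarith
    · have h2 := htail m h.le
      have : (0:ℝ) ≤ ∑ j ∈ Finset.range (M + 1), ((n : ℝ) + j) * A j :=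
        Finset.sum_nonneg fun j _ => mul_nonneg (by positivity) (hA_nonneg j)
      linarith

private lemma minimality (lm mu gm xi : ℝ) (n : ℕ) (al bet C : ℝ) (hl : 0 < lm)
    (hnpos : (0:ℝ) < n)
    (hal1 : 1 < al) (hbet0 : 0 < bet) (hbet1 : bet < 1)
    (hsum : lm * (al + bet) = lm + mu + gm)
    (hprod : lm * (al * bet) = mu)
    (a : ℕ → ℝ) (h0 : a 0 = 0)
    (hrec : ∀ i : ℕ,
      lm * ((i : ℝ) + 1 + n) * a (i + 2)
        = -xi + (lm + mu + gm) * ((i : ℝ) + 1 + n) * a (i + 1)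
          - mu * ((i : ℝ) + 1 + n) * a i)
    (hC0 : 0 < C) (ha_le : ∀ i : ℕ, 1 ≤ i → a i ≤ C / i)
    (b : ℕ → ℝ) (hb0 : b 0 = 0)
    (hbrec : ∀ i : ℕ,
      lm * ((i : ℝ) + 1 + n) * b (i + 2)
        = -xi + (lm + mu + gm) * ((i : ℝ) + 1 + n) * b (i + 1)
          - mu * ((i : ℝ) + 1 + n) * b i)
    (hbpos : ∀ i : ℕ, 1 ≤ i → 0 < b i) :
    ∀ i : ℕ, a i ≤ b i := by
  have herec : ∀ i : ℕ, b (i + 2) - a (i + 2)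
      = (al + bet) * (b (i + 1) - a (i + 1)) - al * bet * (b i - a i) := by
    intro i
    have hcpos : lm * ((i : ℝ) + 1 + n) ≠ 0 := by positivity
    apply mul_left_cancel₀ hcpos
    linear_combination hbrec i - hrec i - (b (i + 1) - a (i + 1)) * ((i:ℝ) + 1 + n) * hsum
      + (b i - a i) * ((i:ℝ) + 1 + n) * hprod
  set s : ℕ → ℝ := fun m => (al ^ m - bet ^ m) / (al - bet) with hs_def
  have halbet : bet < al := lt_trans hbet1 hal1
  have hab : (0:ℝ) < al - bet := sub_pos.2 halbet
  have hs0 : s 0 = 0 := by simp only [hs_def]; simp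
  have hs1 : s 1 = 1 := by simp only [hs_def]; rw [pow_one, pow_one, div_self hab.ne']
  have hs_rec : ∀ m : ℕ, s (m + 2) = (al + bet) * s (m + 1) - al * bet * s m := by
    intro m
    simp only [hs_def]
    field_simp
    ring
  have he : ∀ i : ℕ, (b i - a i = (b 1 - a 1) * s i)
      ∧ (b (i + 1) - a (i + 1) = (b 1 - a 1) * s (i + 1)) := by
    intro i
    induction i with
    | zero =>
      constructor
      · rw [hb0, h0, hs0]; ring
      · rw [hs1]; ring
    | succ i ih =>
      refine ⟨ih.2, ?_⟩
      rw [herec i, ih.1, ih.2, hs_rec i]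
      ring
  have hs_ge : ∀ m : ℕ, al ^ m ≤ s (m + 1) := by
    intro m
    simp only [hs_def]
    rw [le_div_iff₀ hab]
    have h := mul_le_mul_of_nonneg_right (pow_le_pow_left₀ hbet0.le halbet.le m) hbet0.le
    nlinarith [pow_succ al m, pow_succ bet m]
  have hs_nonneg : ∀ m : ℕ, 0 ≤ s m := by
    intro m
    cases m with
    | zero => exact le_of_eq hs0.symm
    | succ m => exact le_trans (pow_nonneg (by linarith) m) (hs_ge m)
  intro i
  by_cases hE : 0 ≤ b 1 - a 1
  · have h := (he i).1
    nlinarith [mul_nonneg hE (hs_nonneg i)]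
  · exfalso
    push_neg at hE
    have hE' : 0 < a 1 - b 1 := by linarith
    obtain ⟨m, hm⟩ := pow_unbounded_of_one_lt (C / (a 1 - b 1)) hal1
    have h1 : (b 1 - a 1) * al ^ m < -C := by
      rw [div_lt_iff₀ hE'] at hm
      nlinarith
    have h2 : (b 1 - a 1) * s (m + 1) ≤ (b 1 - a 1) * al ^ m :=
      mul_le_mul_of_nonpos_left (hs_ge m) (by linarith)
    have h3 : a (m + 1) ≤ C := by
      have h4 := ha_le (m + 1) (Nat.le_add_left 1 m)
      have h5 : C / ((m : ℝ) + 1) ≤ C := by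
        apply div_le_self hC0.le
        linarith [Nat.cast_nonneg (α := ℝ) m]
      push_cast at h4
      linarith
    have h6 := (he m).2
    have h7 := hbpos (m + 1) (Nat.le_add_left 1 m)
    nlinarith

theorem stmt_12 (lm mu gm xi : ℝ) (hl : 0 < lm) (hm : 0 < mu) (hg : 0 < gm) (hxi : 0 < xi)
    (n : ℕ) (hn : 1 ≤ n)
    (ra : ℝ) (hra01 : ra ∈ Set.Ioo (0 : ℝ) 1)
    (hra : mu * ra ^ 2 - (lm + mu + gm) * ra + lm = 0)
    (hra_small : ∀ z : ℝ, mu * z ^ 2 - (lm + mu + gm) * z + lm = 0 → ra ≤ z)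
    (a : ℕ → ℝ) (h0 : a 0 = 0)
    (h1 : a 1 = (xi / lm) * ((∑' k : ℕ, ra ^ k / ((n : ℝ) + k)) - 1 / n))
    (hrec : ∀ i : ℕ,
      lm * ((i : ℝ) + 1 + n) * a (i + 2)
        = -xi + (lm + mu + gm) * ((i : ℝ) + 1 + n) * a (i + 1)
          - mu * ((i : ℝ) + 1 + n) * a i) :
    (∀ i : ℕ, 1 ≤ i → 0 < a i) ∧
    Tendsto a atTop (nhds 0) ∧
    (∃ C : ℝ, ∀ i : ℕ, 1 ≤ i → a i ≤ C / i) ∧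
    (∀ b : ℕ → ℝ, b 0 = 0 →
      (∀ i : ℕ,
        lm * ((i : ℝ) + 1 + n) * b (i + 2)
          = -xi + (lm + mu + gm) * ((i : ℝ) + 1 + n) * b (i + 1)
            - mu * ((i : ℝ) + 1 + n) * b i) →
      (∀ i : ℕ, 1 ≤ i → 0 < b i) →
      ∀ i : ℕ, a i ≤ b i) := by
  obtain ⟨hra0, hra1⟩ := hra01
  have hra0' : ra ≠ 0 := ne_of_gt hra0
  have hl' : lm ≠ 0 := ne_of_gt hl
  have hnpos : (0:ℝ) < n := by exact_mod_cast hn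
  -- the two roots of the characteristic polynomial lm X^2 - S X + mu
  set al : ℝ := ra⁻¹ with hal_def
  set bet : ℝ := mu * ra / lm with hbet_def
  have hal1 : 1 < al := (one_lt_inv₀ hra0).2 hra1
  have hbet0 : 0 < bet := by rw [hbet_def]; positivity
  have hkey : (1 - ra) * (lm - mu * ra) = ra * gm := by linear_combination hra
  have hmura : mu * ra < lm := by nlinarith [mul_pos hra0 hg, sub_pos.2 hra1]
  have hbet1 : bet < 1 := by rw [hbet_def, div_lt_one hl]; exact hmura
  have hsum : lm * (al + bet) = lm + mu + gm := by
    rw [hal_def, hbet_def]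
    field_simp
    linear_combination hra
  have hprod : lm * (al * bet) = mu := by
    rw [hal_def, hbet_def]
    field_simp
  -- the sequence v
  set v : ℕ → ℝ := fun m => xi / lm * ra * ∑' k : ℕ, ra ^ k / ((n : ℝ) + m + 1 + k)
    with hv_def
  have hc : ∀ m : ℕ, (0:ℝ) < (n : ℝ) + m + 1 := fun m => by positivity
  have hv_pos : ∀ m : ℕ, 0 < v m := fun m =>
    mul_pos (by positivity) (geom_tsum_pos hra0 hra1 (hc m))
  set K : ℝ := xi / lm * ra * (1 - ra)⁻¹ with hK_def
  have hK0 : 0 < K := by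
    rw [hK_def]
    have h2 : (0:ℝ) < 1 - ra := by linarith
    positivity
  have hv_le : ∀ m : ℕ, ((n : ℝ) + m + 1) * v m ≤ K := by
    intro m
    have h2' : v m ≤ K * ((n : ℝ) + m + 1)⁻¹ := by
      have h := mul_le_mul_of_nonneg_left (geom_tsum_le hra0.le hra1 (hc m))
        (show (0:ℝ) ≤ xi / lm * ra by positivity)
      simp only [hv_def]
      calc xi / lm * ra * ∑' k : ℕ, ra ^ k / ((n : ℝ) + m + 1 + k)
          ≤ xi / lm * ra * ((1 - ra)⁻¹ * ((n : ℝ) + m + 1)⁻¹) := h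
        _ = K * ((n : ℝ) + m + 1)⁻¹ := by rw [hK_def]; ring
    calc ((n : ℝ) + m + 1) * v m ≤ ((n : ℝ) + m + 1) * (K * ((n : ℝ) + m + 1)⁻¹) :=
          mul_le_mul_of_nonneg_left h2' (hc m).le
      _ = K := by field_simp
  have hv_rec : ∀ m : ℕ,
      ((n : ℝ) + m + 1) * (lm * v (m + 1)) = ((n : ℝ) + m + 1) * (lm * al * v m) - xi := by
    intro m
    have hs := geom_shift hra0.le hra1 (hc m)
    have hcast : (∑' k : ℕ, ra ^ k / ((n : ℝ) + (m + 1 : ℕ) + 1 + k))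
        = ∑' k : ℕ, ra ^ k / (((n : ℝ) + m + 1) + 1 + k) := by
      apply tsum_congr; intro k; congr 1; push_cast; ring
    simp only [hv_def]
    rw [hcast, hs, hal_def]
    field_simp
    ring
  -- a 1 = v 0
  have h1v : a 1 = v 0 := by
    rw [h1]
    have hs := geom_shift hra0.le hra1 hnpos
    have hcast : (∑' k : ℕ, ra ^ k / ((n : ℝ) + (0 : ℕ) + 1 + k))
        = ∑' k : ℕ, ra ^ k / (((n : ℝ) + 1) + k) := by
      apply tsum_congr; intro k; congr 1; push_cast; ring
    simp only [hv_def]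
    rw [hcast, hs]
    ring
  -- a = A
  have hsA : ∀ i : ℕ, a i = minSol bet v i :=
    eq_minSol lm mu gm xi n al bet v hsum hprod hv_rec a h0 h1v hl hnpos hrec
  have hA_nonneg : ∀ m : ℕ, 0 ≤ minSol bet v m := minSol_nonneg hbet0 hv_pos
  have hA_pos : ∀ m : ℕ, 0 < minSol bet v (m + 1) := by
    intro m
    show 0 < bet * minSol bet v m + v m
    exact add_pos_of_nonneg_of_pos (mul_nonneg hbet0.le (hA_nonneg m)) (hv_pos m)
  obtain ⟨C, hC0, hbound⟩ := minSol_bound n bet K v hbet0 hbet1 hv_pos hK0 hv_le hnpos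
  have ha_le : ∀ i : ℕ, 1 ≤ i → a i ≤ C / i := by
    intro i hi
    have hi' : (1:ℝ) ≤ (i : ℝ) := by exact_mod_cast hi
    have hAle : a i ≤ C / ((n : ℝ) + i) := by
      rw [hsA i, le_div_iff₀ (by positivity : (0:ℝ) < (n : ℝ) + i)]
      calc minSol bet v i * ((n : ℝ) + i) = ((n : ℝ) + i) * minSol bet v i := by ring
        _ ≤ C := hbound i
    calc a i ≤ C / ((n : ℝ) + i) := hAle
      _ ≤ C / i := by
          gcongr <;> linarith
  refine ⟨?_, ?_, ⟨C, ha_le⟩, ?_⟩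
  · -- positivity
    intro i hi
    cases i with
    | zero => exact absurd hi (by omega)
    | succ m => rw [hsA (m + 1)]; exact hA_pos m
  · -- tendsto
    apply squeeze_zero (g := fun i : ℕ => C / i)
      (fun i => by rw [hsA i]; exact hA_nonneg i) _ (tendsto_const_div_atTop_nhds_zero_nat C)
    intro i
    rcases Nat.eq_zero_or_pos i with rfl | hi
    · rw [h0]; norm_num
    · exact ha_le i hi
  · -- minimality
    intro b hb0 hbrec hbpos
    exact minimality lm mu gm xi n al bet C hl hnpos hal1 hbet0 hbet1 hsum hprod
      a h0 hrec hC0 ha_le b hb0 hbrec hbpos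
end

section
/- Let 0 < r < 1 and 𝔫 ≥ 1. Then for all i ≥ 1, (1/(i+𝔫))·r^i ≤ Σ_{k=i}^∞ r^k/(k+𝔫) ≤ r^i/(i+𝔫) + r^i/((i+𝔫)·(−log r)). In particular, r^{−i}·Σ_{k=i}^∞ r^k/(k+𝔫) = O(1/i) as i → ∞, and the sequence i ↦ r^{−i}·Σ_{k=i}^∞ r^k/(k+𝔫) tends to 0. -/
open Filter

theorem stmt_14 (r : ℝ) (hr0 : 0 < r) (hr1 : r < 1) (n : ℕ) (hn : 1 ≤ n) :
    (∀ i : ℕ, 1 ≤ i →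
      r ^ i / ((i : ℝ) + n) ≤ ∑' k : ℕ, r ^ (i + k) / ((i : ℝ) + k + n) ∧
      (∑' k : ℕ, r ^ (i + k) / ((i : ℝ) + k + n))
        ≤ r ^ i / ((i : ℝ) + n) + r ^ i / (((i : ℝ) + n) * (-Real.log r))) ∧
    (∃ C : ℝ, ∀ i : ℕ, 1 ≤ i →
      (r ^ i)⁻¹ * ∑' k : ℕ, r ^ (i + k) / ((i : ℝ) + k + n) ≤ C / i) ∧
    Tendsto (fun i : ℕ => (r ^ i)⁻¹ * ∑' k : ℕ, r ^ (i + k) / ((i : ℝ) + k + n))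
      atTop (nhds 0) := by
  have hn1 : (1:ℝ) ≤ n := by exact_mod_cast hn
  have h1r : (0:ℝ) < 1 - r := by linarith
  have hlog : 0 < -Real.log r := by
    have := Real.log_neg hr0 hr1; linarith
  have hposn : ∀ i : ℕ, (0:ℝ) < (i:ℝ) + n := by
    intro i
    have h1 : (0:ℝ) ≤ (i:ℝ) := Nat.cast_nonneg i
    linarith
  have hsum : ∀ i : ℕ, Summable (fun k : ℕ => r ^ (i + k) / ((i:ℝ) + k + n)) := by
    intro i
    have hg : Summable (fun k : ℕ => r ^ (i + k)) := by
      simpa [pow_add] using (summable_geometric_of_lt_one hr0.le hr1).mul_left (r ^ i)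
    refine Summable.of_nonneg_of_le (fun k => by positivity) (fun k => ?_) hg
    refine div_le_self (by positivity) ?_
    have h1 : (0:ℝ) ≤ (i:ℝ) := Nat.cast_nonneg i
    have h2 : (0:ℝ) ≤ (k:ℝ) := Nat.cast_nonneg k
    linarith
  -- crude upper bound
  have hup : ∀ i : ℕ, (∑' k : ℕ, r ^ (i + k) / ((i:ℝ) + k + n))
      ≤ r ^ i / (((i:ℝ) + n) * (1 - r)) := by
    intro i
    have hg : Summable (fun k : ℕ => r ^ i * r ^ k / ((i:ℝ) + n)) :=
      ((summable_geometric_of_lt_one hr0.le hr1).mul_left (r ^ i)).div_const _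
    have h1 : ∀ k : ℕ, r ^ (i + k) / ((i:ℝ) + k + n) ≤ r ^ i * r ^ k / ((i:ℝ) + n) := by
      intro k
      rw [pow_add]
      apply div_le_div_of_nonneg_left (by positivity) (hposn i)
      have h2 : (0:ℝ) ≤ (k:ℝ) := Nat.cast_nonneg k
      linarith
    calc (∑' k : ℕ, r ^ (i + k) / ((i:ℝ) + k + n))
        ≤ ∑' k : ℕ, r ^ i * r ^ k / ((i:ℝ) + n) := Summable.tsum_le_tsum h1 (hsum i) hg
      _ = r ^ i / (((i:ℝ) + n) * (1 - r)) := by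
          rw [tsum_div_const, tsum_mul_left, tsum_geometric_of_lt_one hr0.le hr1]
          field_simp
  have hlow : ∀ i : ℕ, r ^ i / ((i:ℝ) + n) ≤ ∑' k : ℕ, r ^ (i + k) / ((i:ℝ) + k + n) := by
    intro i
    have := Summable.le_tsum (hsum i) 0 (fun k _ => by positivity)
    simpa using this
  have hfrac : 1 / (1 - r) ≤ 1 + 1 / (-Real.log r) := by
    have hx : Real.log (1/r) ≤ 1/r - 1 := Real.log_le_sub_one_of_pos (by positivity)
    rw [Real.log_div one_ne_zero (ne_of_gt hr0), Real.log_one] at hx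
    have hrr : r * (1/r) = 1 := by field_simp
    have hL : (-Real.log r) * r ≤ 1 - r := by nlinarith [mul_le_mul_of_nonneg_left hx hr0.le]
    have hinv : (-Real.log r) * (1 / (-Real.log r)) = 1 := mul_one_div_cancel hlog.ne'
    rw [div_le_iff₀ h1r]
    nlinarith [hL, hinv, mul_pos hlog (one_div_pos.mpr hlog), one_div_pos.mpr hlog]
  have hpart2 : ∀ i : ℕ, 1 ≤ i →
      (r ^ i)⁻¹ * (∑' k : ℕ, r ^ (i + k) / ((i:ℝ) + k + n)) ≤ (1 - r)⁻¹ / i := by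
    intro i hi
    have hi0 : (0:ℝ) < i := by exact_mod_cast hi
    have hri : (0:ℝ) < r ^ i := pow_pos hr0 i
    have h1 := mul_le_mul_of_nonneg_left (hup i) (inv_nonneg.mpr hri.le)
    refine h1.trans ?_
    have heq : (r ^ i)⁻¹ * (r ^ i / (((i:ℝ) + n) * (1 - r)))
        = (((i:ℝ) + n) * (1 - r))⁻¹ := by
      field_simp
    rw [heq]
    have h2 : ((i:ℝ)) * (1 - r) ≤ ((i:ℝ) + n) * (1 - r) := by nlinarith
    calc (((i:ℝ) + n) * (1 - r))⁻¹ ≤ ((i:ℝ) * (1 - r))⁻¹ :=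
          inv_anti₀ (by positivity) h2
      _ = (1 - r)⁻¹ / i := by rw [mul_inv, div_eq_mul_inv]; ring
  refine ⟨?_, ?_, ?_⟩
  · intro i hi
    refine ⟨hlow i, le_trans (hup i) ?_⟩
    calc r ^ i / (((i:ℝ) + n) * (1 - r))
        = r ^ i / ((i:ℝ) + n) * (1 / (1 - r)) := by rw [mul_one_div, div_div]
      _ ≤ r ^ i / ((i:ℝ) + n) * (1 + 1 / (-Real.log r)) :=
          mul_le_mul_of_nonneg_left hfrac (by positivity)
      _ = r ^ i / ((i:ℝ) + n) + r ^ i / (((i:ℝ) + n) * (-Real.log r)) := by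
          rw [mul_add, mul_one, mul_one_div, div_div]
  · exact ⟨(1 - r)⁻¹, hpart2⟩
  · have hb : Tendsto (fun i : ℕ => (1 - r)⁻¹ / (i:ℝ)) atTop (nhds 0) := by
      have := tendsto_natCast_atTop_atTop (R := ℝ)
      simpa [div_eq_mul_inv] using (this.inv_tendsto_atTop).const_mul (1 - r)⁻¹
    refine squeeze_zero' ?_ ?_ hb
    · exact Eventually.of_forall fun i => by
        have : (0:ℝ) ≤ ∑' k : ℕ, r ^ (i + k) / ((i:ℝ) + k + n) := tsum_nonneg (fun k => by positivity :
          ∀ k : ℕ, (0:ℝ) ≤ r ^ (i + k) / ((i:ℝ) + k + n))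
        exact mul_nonneg (inv_nonneg.mpr (pow_pos hr0 i).le) this
    · filter_upwards [eventually_ge_atTop 1] with i hi using hpart2 i hi
end

section
/- Let λ, μ, γ > 0, ξ > 0, 𝔫 ≥ 1. For the recurrence a_0 = 0, λ(i+𝔫)a_{i+1} = −ξ + (λ+μ+γ)(i+𝔫)a_i − μ(i+𝔫)a_{i-1}, there exists â > 0 such that: for every initial value a_1 > â the solution tends to +∞, and for every a_1 < â the solution tends to −∞. -/
open Filter

/-- canonical solution with `a 0 = 0`, `a 1 = t`. -/
noncomputable def sol18 (lm mu gm xi : ℝ) (n : ℕ) (t : ℝ) : ℕ → ℝ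
  | 0 => 0
  | 1 => t
  | (i+2) => (-xi + (lm + mu + gm) * ((i : ℝ) + 1 + n) * sol18 lm mu gm xi n t (i + 1)
      - mu * ((i : ℝ) + 1 + n) * sol18 lm mu gm xi n t i) / (lm * ((i : ℝ) + 1 + n))

/-- homogeneous solution with `u 0 = 0`, `u 1 = 1`. -/
noncomputable def uu18 (lm mu gm : ℝ) : ℕ → ℝ
  | 0 => 0
  | 1 => 1
  | (i+2) => ((lm + mu + gm) * uu18 lm mu gm (i + 1) - mu * uu18 lm mu gm i) / lm

section lemmas

variable {lm mu gm xi : ℝ} {n : ℕ}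

private lemma hcpos (n : ℕ) (i : ℕ) : (0:ℝ) < (i : ℝ) + 1 + n := by positivity

lemma sol18_rec (hl : 0 < lm) (t : ℝ) : ∀ i : ℕ,
    lm * ((i : ℝ) + 1 + n) * sol18 lm mu gm xi n t (i + 2)
      = -xi + (lm + mu + gm) * ((i : ℝ) + 1 + n) * sol18 lm mu gm xi n t (i + 1)
        - mu * ((i : ℝ) + 1 + n) * sol18 lm mu gm xi n t i := by
  intro i
  have h : lm * ((i : ℝ) + 1 + n) ≠ 0 := by positivity
  rw [show sol18 lm mu gm xi n t (i+2) = (-xi + (lm + mu + gm) * ((i : ℝ) + 1 + n) *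
      sol18 lm mu gm xi n t (i + 1) - mu * ((i : ℝ) + 1 + n) * sol18 lm mu gm xi n t i)
      / (lm * ((i : ℝ) + 1 + n)) from rfl, mul_div_cancel₀ _ h]

lemma uniq18 (hl : 0 < lm) (a b : ℕ → ℝ)
    (ha : ∀ i : ℕ, lm * ((i : ℝ) + 1 + n) * a (i + 2)
      = -xi + (lm + mu + gm) * ((i : ℝ) + 1 + n) * a (i + 1) - mu * ((i : ℝ) + 1 + n) * a i)
    (hb : ∀ i : ℕ, lm * ((i : ℝ) + 1 + n) * b (i + 2)
      = -xi + (lm + mu + gm) * ((i : ℝ) + 1 + n) * b (i + 1) - mu * ((i : ℝ) + 1 + n) * b i)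
    (h0 : a 0 = b 0) (h1 : a 1 = b 1) : ∀ i, a i = b i := by
  have key : ∀ i, a i = b i ∧ a (i+1) = b (i+1) := by
    intro i
    induction i with
    | zero => exact ⟨h0, h1⟩
    | succ k ih =>
      refine ⟨ih.2, ?_⟩
      have h : lm * ((k : ℝ) + 1 + n) ≠ 0 := by positivity
      have e : lm * ((k : ℝ) + 1 + n) * a (k + 2) = lm * ((k : ℝ) + 1 + n) * b (k + 2) := by
        rw [ha k, hb k, ih.1, ih.2]
      exact mul_left_cancel₀ h e
  exact fun i => (key i).1

lemma uu18_mul (hl : 0 < lm) (i : ℕ) :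
    lm * uu18 lm mu gm (i + 2) = (lm + mu + gm) * uu18 lm mu gm (i + 1) - mu * uu18 lm mu gm i := by
  rw [show uu18 lm mu gm (i+2)
      = ((lm + mu + gm) * uu18 lm mu gm (i + 1) - mu * uu18 lm mu gm i) / lm from rfl,
    mul_div_cancel₀ _ (ne_of_gt hl)]

lemma affine18 (hl : 0 < lm) (t s : ℝ) : ∀ i,
    sol18 lm mu gm xi n t i = sol18 lm mu gm xi n s i + (t - s) * uu18 lm mu gm i := by
  refine uniq18 hl _ _ (sol18_rec hl t) ?_ (by simp [sol18, uu18]) (by simp [sol18, uu18])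
  intro i
  have h2 := uu18_mul (mu := mu) (gm := gm) hl i
  have h1 := sol18_rec (mu := mu) (gm := gm) (n := n) (xi := xi) hl s i
  linear_combination h1 + ((i : ℝ) + 1 + n) * (t - s) * h2

lemma uu18_growth (hl : 0 < lm) (hm : 0 < mu) (hg : 0 < gm) : ∀ i : ℕ,
    uu18 lm mu gm i ≤ uu18 lm mu gm (i+1) ∧ lm + i * gm ≤ lm * uu18 lm mu gm (i+1) := by
  intro i
  induction i with
  | zero => simp [uu18]
  | succ k ih =>
    have e := uu18_mul (mu := mu) (gm := gm) hl k
    have h1 : (1:ℝ) ≤ uu18 lm mu gm (k+1) := by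
      nlinarith [ih.2, Nat.cast_nonneg (α := ℝ) k]
    constructor
    · nlinarith [ih.1]
    · push_cast
      nlinarith [ih.1, ih.2]

lemma uu18_nonneg (hl : 0 < lm) (hm : 0 < mu) (hg : 0 < gm) : ∀ i : ℕ, 0 ≤ uu18 lm mu gm i := by
  intro i
  cases i with
  | zero => simp [uu18]
  | succ k =>
    have := (uu18_growth hl hm hg k).2
    nlinarith [Nat.cast_nonneg (α := ℝ) k]

lemma uu18_tendsto (hl : 0 < lm) (hm : 0 < mu) (hg : 0 < gm) :
    Tendsto (uu18 lm mu gm) atTop atTop := by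
  have hb : ∀ i : ℕ, ((i : ℝ) - 1) * (gm / lm) ≤ uu18 lm mu gm i := by
    intro i
    cases i with
    | zero => simp [uu18]; positivity
    | succ k =>
      have h := (uu18_growth hl hm hg k).2
      have heq : ((k+1 : ℕ) - 1 : ℝ) * (gm/lm) = ((k:ℝ) * gm)/lm := by push_cast; ring
      rw [heq, div_le_iff₀ hl]
      nlinarith [h]
  refine tendsto_atTop_mono hb ?_
  exact Tendsto.atTop_mul_const (div_pos hg hl)
    (tendsto_atTop_add_const_right atTop (-1) tendsto_natCast_atTop_atTop)

/-- If the solution ever goes negative, it tends to `-∞`. -/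
lemma down18 (hl : 0 < lm) (hm : 0 < mu) (hg : 0 < gm) (hxi : 0 < xi)
    (a : ℕ → ℝ) (h0 : a 0 = 0)
    (hrec : ∀ i : ℕ, lm * ((i : ℝ) + 1 + n) * a (i + 2)
      = -xi + (lm + mu + gm) * ((i : ℝ) + 1 + n) * a (i + 1) - mu * ((i : ℝ) + 1 + n) * a i)
    (m₀ : ℕ) (hneg : a m₀ < 0) : Tendsto a atTop atBot := by
  classical
  have hP : ∃ m, a m < 0 := ⟨m₀, hneg⟩
  obtain ⟨j, hk⟩ : ∃ j, Nat.find hP = j + 1 := by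
    refine ⟨Nat.find hP - 1, ?_⟩
    have : Nat.find hP ≠ 0 := by
      intro h
      have := Nat.find_spec hP
      rw [h, h0] at this; linarith
    omega
  have hB : a (j+1) < 0 := by have := Nat.find_spec hP; rwa [hk] at this
  have hprev : 0 ≤ a j := le_of_not_gt (Nat.find_min hP (by omega))
  set B := a (j+1) with hBdef
  have hq : gm * B / lm < 0 := div_neg_of_neg_of_pos (mul_neg_of_pos_of_neg hg hB) hl
  have key : ∀ m : ℕ, a (m + j + 1) ≤ B + m * (gm * B / lm) ∧ a (m + j + 1) ≤ a (m + j) := by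
    intro m
    induction m with
    | zero => exact ⟨by simp [hBdef], by simpa using hB.le.trans hprev⟩
    | succ m ih =>
      have e := hrec (m + j)
      set c : ℝ := ((m + j : ℕ) : ℝ) + 1 + n with hcdef
      have hc0 : (0:ℝ) < c := hcpos n (m+j)
      have hle : a (m + j + 1) ≤ B := by
        have : (m:ℝ) * (gm * B / lm) ≤ 0 :=
          mul_nonpos_of_nonneg_of_nonpos (Nat.cast_nonneg m) hq.le
        linarith [ih.1]
      have h₁ : mu * c * (a (m + j + 1) - a (m + j)) ≤ 0 :=
        mul_nonpos_of_nonneg_of_nonpos (by positivity) (by linarith [ih.2])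
      have h₂ : gm * c * a (m + j + 1) ≤ gm * c * B :=
        mul_le_mul_of_nonneg_left hle (by positivity)
      have hkey : lm * c * a (m + j + 2) ≤ lm * c * a (m + j + 1) + c * (gm * B) := by
        nlinarith [e, h₁, h₂]
      have hdiv : a (m + j + 2) ≤ a (m + j + 1) + gm * B / lm := by
        have hrw : lm * c * (a (m + j + 1) + gm * B / lm) = lm * c * a (m + j + 1) + c * (gm * B) := by
          field_simp
        have := hkey.trans_eq hrw.symm
        exact le_of_mul_le_mul_left this (by positivity)
      have hidx : m + 1 + j + 1 = m + j + 2 := by omega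
      have hidx2 : m + 1 + j = m + j + 1 := by omega
      rw [hidx, hidx2]
      constructor
      · push_cast
        linarith [ih.1]
      · linarith
  have hbound : Tendsto (fun m : ℕ => B + (m:ℝ) * (gm * B / lm)) atTop atBot :=
    tendsto_atBot_add_const_left atTop B
      (Tendsto.atTop_mul_const_of_neg hq tendsto_natCast_atTop_atTop)
  have hshift : Tendsto (fun m : ℕ => a (m + (j + 1))) atTop atBot := by
    refine tendsto_atBot_mono (fun m => ?_) hbound
    have := (key m).1
    have hidx : m + (j + 1) = m + j + 1 := by omega
    rw [hidx]; exact this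
  exact (tendsto_add_atTop_iff_nat (j + 1)).1 hshift

/-- If the solution ever exceeds `xi/(gm*n)`, it tends to `+∞`. -/
lemma up18 (hl : 0 < lm) (hm : 0 < mu) (hg : 0 < gm) (hxi : 0 < xi) (hn : 1 ≤ n)
    (a : ℕ → ℝ) (h0 : a 0 = 0)
    (hrec : ∀ i : ℕ, lm * ((i : ℝ) + 1 + n) * a (i + 2)
      = -xi + (lm + mu + gm) * ((i : ℝ) + 1 + n) * a (i + 1) - mu * ((i : ℝ) + 1 + n) * a i)
    (m₀ : ℕ) (hbig : xi / (gm * n) < a m₀) : Tendsto a atTop atTop := by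
  classical
  have hn0 : (0:ℝ) < n := by exact_mod_cast hn
  have hA : (0:ℝ) < xi / (gm * n) := by positivity
  have hP : ∃ m, xi / (gm * n) < a m := ⟨m₀, hbig⟩
  obtain ⟨j, hk⟩ : ∃ j, Nat.find hP = j + 1 := by
    refine ⟨Nat.find hP - 1, ?_⟩
    have : Nat.find hP ≠ 0 := by
      intro h
      have := Nat.find_spec hP
      rw [h, h0] at this; linarith
    omega
  have hB : xi / (gm * n) < a (j+1) := by have := Nat.find_spec hP; rwa [hk] at this
  have hprev : a j ≤ xi / (gm * n) := le_of_not_gt (Nat.find_min hP (by omega))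
  set B := a (j+1) with hBdef
  have hBpos : 0 < B := hA.trans hB
  have hgB : xi / n < gm * B := by
    rw [div_lt_iff₀ hn0]
    have := (div_lt_iff₀ (by positivity : (0:ℝ) < gm * n)).1 hB
    nlinarith
  set d : ℝ := (gm * B - xi / n) / lm with hddef
  have hd : 0 < d := div_pos (by linarith) hl
  have key : ∀ m : ℕ, B + m * d ≤ a (m + j + 1) ∧ a (m + j) ≤ a (m + j + 1) := by
    intro m
    induction m with
    | zero => exact ⟨by simp [hBdef], by simpa using hprev.trans hB.le⟩
    | succ m ih =>
      have e := hrec (m + j)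
      set c : ℝ := ((m + j : ℕ) : ℝ) + 1 + n with hcdef
      have hc0 : (0:ℝ) < c := hcpos n (m+j)
      have hcn : (n:ℝ) ≤ c := by
        have : (0:ℝ) ≤ ((m + j : ℕ) : ℝ) := Nat.cast_nonneg _
        simp only [hcdef]; linarith
      have hge : B ≤ a (m + j + 1) := by
        have : (0:ℝ) ≤ (m:ℝ) * d := mul_nonneg (Nat.cast_nonneg m) hd.le
        linarith [ih.1]
      have h₁ : 0 ≤ mu * c * (a (m + j + 1) - a (m + j)) :=
        mul_nonneg (by positivity) (by linarith [ih.2])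
      have h₂ : gm * c * B ≤ gm * c * a (m + j + 1) :=
        mul_le_mul_of_nonneg_left hge (by positivity)
      have hxin : xi ≤ c * (xi / n) := by
        have h := mul_le_mul_of_nonneg_right hcn (div_pos hxi hn0).le
        have h2 : (n:ℝ) * (xi / n) = xi := by field_simp
        linarith
      have hkey : lm * c * a (m + j + 1) + c * (gm * B - xi / n) ≤ lm * c * a (m + j + 2) := by
        nlinarith [e, h₁, h₂, hxin]
      have hdiv : a (m + j + 1) + d ≤ a (m + j + 2) := by
        have hrw : lm * c * (a (m + j + 1) + d) = lm * c * a (m + j + 1) + c * (gm * B - xi / n) := by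
          simp only [hddef]; field_simp
        have := hrw.trans_le hkey
        exact le_of_mul_le_mul_left this (by positivity)
      have hidx : m + 1 + j + 1 = m + j + 2 := by omega
      rw [hidx]
      constructor
      · push_cast
        linarith [ih.1]
      · have hidx2 : m + 1 + j = m + j + 1 := by omega
        rw [hidx2]; linarith
  have hbound : Tendsto (fun m : ℕ => B + (m:ℝ) * d) atTop atTop := by
    have := Tendsto.atTop_mul_const hd (tendsto_natCast_atTop_atTop (R := ℝ))
    exact tendsto_atTop_add_const_left atTop B this
  have hshift : Tendsto (fun m : ℕ => a (m + (j + 1))) atTop atTop := by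
    refine tendsto_atTop_mono (fun m => ?_) hbound
    have := (key m).1
    have hidx : m + (j + 1) = m + j + 1 := by omega
    rw [hidx]; exact this
  exact (tendsto_add_atTop_iff_nat (j + 1)).1 hshift

end lemmas

theorem stmt_18 (lm mu gm xi : ℝ) (hl : 0 < lm) (hm : 0 < mu) (hg : 0 < gm) (hxi : 0 < xi)
    (n : ℕ) (hn : 1 ≤ n) :
    ∃ ahat : ℝ, 0 < ahat ∧
      ∀ a : ℕ → ℝ, a 0 = 0 →
        (∀ i : ℕ,
          lm * ((i : ℝ) + 1 + n) * a (i + 2)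
            = -xi + (lm + mu + gm) * ((i : ℝ) + 1 + n) * a (i + 1)
              - mu * ((i : ℝ) + 1 + n) * a i) →
        (ahat < a 1 → Tendsto a atTop atTop) ∧
        (a 1 < ahat → Tendsto a atTop atBot) := by
  classical
  have hn0 : (0:ℝ) < n := by exact_mod_cast hn
  set T : Set ℝ := {t | Tendsto (sol18 lm mu gm xi n t) atTop atBot} with hT
  set t₀ : ℝ := xi / (2 * (lm + mu + gm) * (1 + n)) with ht₀
  have ht₀pos : 0 < t₀ := by positivity
  have ht₀T : t₀ ∈ T := by
    refine down18 hl hm hg hxi _ rfl (sol18_rec hl t₀) 2 ?_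
    have e := sol18_rec (mu := mu) (gm := gm) (n := n) (xi := xi) hl t₀ 0
    have e1 : sol18 lm mu gm xi n t₀ 1 = t₀ := by simp [sol18]
    have e0 : sol18 lm mu gm xi n t₀ 0 = 0 := by simp [sol18]
    rw [e1, e0] at e
    norm_num at e
    have hval : (lm + mu + gm) * (1 + (n:ℝ)) * t₀ = xi / 2 := by
      rw [ht₀]
      field_simp
    by_contra hcon
    push_neg at hcon
    have hpos : (0:ℝ) ≤ lm * (1 + (n:ℝ)) * sol18 lm mu gm xi n t₀ 2 :=
      mul_nonneg (by positivity) hcon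
    nlinarith [e, hval]
  have hTne : T.Nonempty := ⟨t₀, ht₀T⟩
  have hTbdd : BddAbove T := by
    refine ⟨xi / (gm * n), fun t ht => ?_⟩
    by_contra hgt
    push_neg at hgt
    have hup : Tendsto (sol18 lm mu gm xi n t) atTop atTop :=
      up18 hl hm hg hxi hn _ rfl (sol18_rec hl t) 1 (by simpa [sol18] using hgt)
    obtain ⟨m, hm1, hm2⟩ :=
      (((hup.eventually_ge_atTop 1)).and (ht.eventually_le_atBot 0)).exists
    linarith
  refine ⟨sSup T, lt_of_lt_of_le ht₀pos (le_csSup hTbdd ht₀T), ?_⟩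
  intro a h0 hrec
  have huniq := uniq18 hl a (sol18 lm mu gm xi n (a 1)) hrec (sol18_rec hl (a 1))
    (by simpa [sol18] using h0) (by simp [sol18])
  constructor
  · intro hgt
    set t := a 1 with htdef
    set s := (sSup T + t) / 2 with hsdef
    have hs1 : sSup T < s := by rw [hsdef]; linarith
    have hs2 : s < t := by rw [hsdef]; linarith
    have hsT : s ∉ T := fun h => absurd (le_csSup hTbdd h) (not_le.2 hs1)
    have hspos : ∀ m, 0 ≤ sol18 lm mu gm xi n s m := by
      intro m
      by_contra h
      push_neg at h
      exact hsT (down18 hl hm hg hxi _ rfl (sol18_rec hl s) m h)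
    have hcomp : ∀ m, (t - s) * uu18 lm mu gm m ≤ a m := by
      intro m
      rw [huniq m, affine18 hl t s m]
      linarith [hspos m]
    refine tendsto_atTop_mono hcomp ?_
    have := (uu18_tendsto hl hm hg).const_mul_atTop (by linarith : (0:ℝ) < t - s)
    exact this
  · intro hlt
    set t := a 1 with htdef
    obtain ⟨s, hsT, hts⟩ := exists_lt_of_lt_csSup hTne hlt
    have hcomp : ∀ m, a m ≤ sol18 lm mu gm xi n s m := by
      intro m
      rw [huniq m, affine18 hl t s m]
      have := mul_nonneg (by linarith : (0:ℝ) ≤ s - t) (uu18_nonneg hl hm hg m)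
      nlinarith
    exact tendsto_atBot_mono hcomp hsT
end

section
/- Let λ, μ, γ > 0, ξ > 0, 𝔫 ≥ 1, and let (a_i') be a solution of a_0' = 0, λ(i+𝔫)a_{i+1}' = −ξ + (λ+μ+γ)(i+𝔫)a_i' − μ(i+𝔫)a_{i-1}' with a_i' > 0 for all i ≥ 1 that is unbounded. Then a_i' → +∞ as i → ∞. -/
open Filter

theorem stmt_19 (lm mu gm xi : ℝ) (hl : 0 < lm) (hm : 0 < mu) (hg : 0 < gm) (hxi : 0 < xi)
    (n : ℕ) (hn : 1 ≤ n) (a : ℕ → ℝ) (h0 : a 0 = 0)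
    (hrec : ∀ i : ℕ,
      lm * ((i : ℝ) + 1 + n) * a (i + 2)
        = -xi + (lm + mu + gm) * ((i : ℝ) + 1 + n) * a (i + 1)
          - mu * ((i : ℝ) + 1 + n) * a i)
    (hpos : ∀ i : ℕ, 1 ≤ i → 0 < a i)
    (hunbdd : ¬∃ C : ℝ, ∀ i : ℕ, a i ≤ C) :
    Tendsto a atTop atTop := by
  have hn1 : (1 : ℝ) ≤ (n : ℝ) := by exact_mod_cast hn
  set C := xi / (gm * n) with hCdef
  have hgn : (0 : ℝ) < gm * n := by nlinarith
  have hCpos : 0 < C := div_pos hxi hgn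
  have hCx : gm * n * C = xi := by
    rw [hCdef]; field_simp
  -- a starting point of increase above C
  have hex : ∃ m, C < a (m + 1) ∧ a m < a (m + 1) := by
    by_contra h
    push_neg at h
    apply hunbdd
    refine ⟨max C (a 0), fun i => ?_⟩
    induction i with
    | zero => exact le_max_right _ _
    | succ i ih =>
      by_cases hc : C < a (i + 1)
      · exact le_trans (h i hc) ih
      · exact le_trans (not_lt.mp hc) (le_max_left _ _)
  obtain ⟨m, hm1, hm2⟩ := hex
  -- one-step increase lemma
  have step : ∀ i : ℕ, C < a (i + 1) → a i < a (i + 1) → a (i + 1) < a (i + 2) := by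
    intro i h1 h2
    have hr := hrec i
    have hi0 : (0 : ℝ) ≤ (i : ℝ) := Nat.cast_nonneg i
    have hp : (0 : ℝ) < (i : ℝ) + 1 + n := by linarith
    nlinarith [mul_pos hl hp, mul_pos hm hp, mul_pos hg hp,
      mul_pos (mul_pos hg hp) (sub_pos.mpr h1),
      mul_pos (mul_pos hm hp) (sub_pos.mpr h2),
      mul_pos hg hCpos, mul_nonneg (mul_nonneg hg.le (by linarith : (0:ℝ) ≤ (i:ℝ) + 1)) hCpos.le]
  -- from m on, a is strictly increasing and stays above C
  have key : ∀ j, m ≤ j → C < a (j + 1) ∧ a j < a (j + 1) := by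
    intro j hj
    induction j, hj using Nat.le_induction with
    | base => exact ⟨hm1, hm2⟩
    | succ j hj ih =>
      have hs := step j ih.1 ih.2
      exact ⟨lt_trans ih.1 hs, hs⟩
  have chain : ∀ j, m ≤ j → ∀ k, j ≤ k → a j ≤ a k := by
    intro j hj k hk
    induction k, hk using Nat.le_induction with
    | base => exact le_refl _
    | succ k hk ih => exact le_trans ih (key k (le_trans hj hk)).2.le
  -- bound on initial segment
  obtain ⟨A, hA⟩ : ∃ A, ∀ j ≤ m, a j ≤ A := by
    refine ⟨(Finset.range (m + 1)).sup' ⟨0, Finset.mem_range.mpr (by omega)⟩ a, fun j hj => ?_⟩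
    exact Finset.le_sup' a (Finset.mem_range.mpr (by omega))
  rw [tendsto_atTop]
  intro b
  push_neg at hunbdd
  obtain ⟨i, hi⟩ := hunbdd (max b A)
  have him : m ≤ i := by
    by_contra hmi
    exact absurd (le_trans (hA i (by omega)) (le_max_right b A)) (not_le.mpr hi)
  rw [eventually_atTop]
  exact ⟨i, fun k hk => le_of_lt (lt_of_le_of_lt (le_max_left b A)
    (lt_of_lt_of_le hi (chain i him k hk)))⟩
end
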